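/- Fix ρ, μ ∈ ℝ. The expected improvement EI(σ) = (ρ − μ)·Φ((ρ − μ)/σ) + σ·φ((ρ − μ)/σ), viewed as a function of the predictive standard deviation σ, is strictly monotonically increasing on (0, ∞). -/

import Mathlib

open MeasureTheory

/-- The standard normal probability density function. -/
noncomputable def stdNormalPDF (z : ℝ) : ℝ := Real.exp (-z ^ 2 / 2) / Real.sqrt (2 * Real.pi)

/-- The standard normal cumulative distribution function. -/
noncomputable def stdNormalCDF (z : ℝ) : ℝ := ∫ t in Set.Iic z, stdNormalPDF t

lemma continuous_stdNormalPDF : Continuous stdNormalPDF := by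
  unfold stdNormalPDF
  fun_prop

lemma stdNormalPDF_pos (z : ℝ) : 0 < stdNormalPDF z := by
  unfold stdNormalPDF
  positivity

lemma integrable_stdNormalPDF : Integrable stdNormalPDF := by
  have h : Integrable (fun x : ℝ => Real.exp (-(1/2) * x ^ 2)) :=
    integrable_exp_neg_mul_sq (by norm_num)
  have := h.div_const (Real.sqrt (2 * Real.pi))
  convert this using 2 with x
  unfold stdNormalPDF
  ring_nf

lemma hasDerivAt_stdNormalCDF (x : ℝ) :
    HasDerivAt stdNormalCDF (stdNormalPDF x) x := by
  have key : ∀ z : ℝ, stdNormalCDF z = stdNormalCDF 0 + ∫ t in (0:ℝ)..z, stdNormalPDF t := by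
    intro z
    unfold stdNormalCDF
    rw [← intervalIntegral.integral_Iic_sub_Iic integrable_stdNormalPDF.integrableOn
      integrable_stdNormalPDF.integrableOn]
    ring
  have h : HasDerivAt (fun u => stdNormalCDF 0 + ∫ t in (0:ℝ)..u, stdNormalPDF t)
      (stdNormalPDF x) x := by
    refine HasDerivAt.const_add _ ?_
    exact intervalIntegral.integral_hasDerivAt_right
      (integrable_stdNormalPDF.intervalIntegrable)
      (continuous_stdNormalPDF.stronglyMeasurableAtFilter _ _)
      continuous_stdNormalPDF.continuousAt
  exact h.congr_of_eventuallyEq (Filter.Eventually.of_forall key)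

lemma hasDerivAt_stdNormalPDF (x : ℝ) :
    HasDerivAt stdNormalPDF (-x * stdNormalPDF x) x := by
  have h : HasDerivAt (fun z : ℝ => Real.exp (-z ^ 2 / 2) / Real.sqrt (2 * Real.pi))
      ((Real.exp (-x ^ 2 / 2) * (-x)) / Real.sqrt (2 * Real.pi)) x := by
    have h1 : HasDerivAt (fun z : ℝ => -z ^ 2 / 2) (-x) x := by
      have := ((hasDerivAt_pow 2 x).neg).div_const 2
      simpa using this.congr_deriv (by ring)
    exact ((h1.exp)).div_const _
  have := h
  unfold stdNormalPDF
  convert this using 1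
  ring

/-- The expected improvement `EI(σ) = (ρ - μ)·Φ((ρ - μ)/σ) + σ·φ((ρ - μ)/σ)`, as a function
of the predictive standard deviation σ, is strictly monotonically increasing on `(0, ∞)`. -/
theorem expected_improvement_strictMonoOn_sigma (ρ μ : ℝ) :
    StrictMonoOn
      (fun σ : ℝ => (ρ - μ) * stdNormalCDF ((ρ - μ) / σ) + σ * stdNormalPDF ((ρ - μ) / σ))
      (Set.Ioi (0 : ℝ)) := by
  set a := ρ - μ
  have key : ∀ σ : ℝ, 0 < σ →
      HasDerivAt (fun σ : ℝ => a * stdNormalCDF (a / σ) + σ * stdNormalPDF (a / σ))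
        (stdNormalPDF (a / σ)) σ := by
    intro σ hσ
    have hu : HasDerivAt (fun s : ℝ => a / s) (-a / σ ^ 2) σ := by
      have h := (hasDerivAt_inv hσ.ne').const_mul a
      have heq : (fun s : ℝ => a * s⁻¹) = fun s : ℝ => a / s := by
        funext s; rw [div_eq_mul_inv]
      rw [heq] at h
      convert (show HasDerivAt (fun s : ℝ => a / s) _ σ from h) using 1
      ring
    have h1 : HasDerivAt (fun s : ℝ => stdNormalCDF (a / s))
        (stdNormalPDF (a / σ) * (-a / σ ^ 2)) σ :=
      (hasDerivAt_stdNormalCDF (a / σ)).comp σ hu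
    have h2 : HasDerivAt (fun s : ℝ => stdNormalPDF (a / s))
        (-(a / σ) * stdNormalPDF (a / σ) * (-a / σ ^ 2)) σ :=
      (hasDerivAt_stdNormalPDF (a / σ)).comp σ hu
    have h3 := (h1.const_mul a).add ((hasDerivAt_id σ).mul h2)
    convert (show HasDerivAt (fun σ : ℝ => a * stdNormalCDF (a / σ) + σ * stdNormalPDF (a / σ)) _ σ from h3) using 1
    simp only [id_eq]
    field_simp
    ring
  have hcont : ContinuousOn
      (fun σ : ℝ => a * stdNormalCDF (a / σ) + σ * stdNormalPDF (a / σ)) (Set.Ioi 0) :=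
    fun x hx => ((key x hx).continuousAt).continuousWithinAt
  refine strictMonoOn_of_deriv_pos (convex_Ioi 0) hcont ?_
  intro x hx
  rw [interior_Ioi] at hx
  rw [(key x hx).deriv]
  exact stdNormalPDF_pos _
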